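/- A sequence v ∈ ℓ²(ℕ,ℂ) satisfies Γ_f(conj∘v) = 0 if and only if Σ_{k=0}^∞ conj(v(k))·z_j^k = 0 for every j = 1,…,N. -/

import Mathlib

/-- `v ∈ ℓ²` satisfies `Γ_f(conj∘v) = 0` iff
`Σ_k conj(v(k))·z_j^k = 0` for every `j = 1,…,N`. -/
theorem stmt_9 (N : ℕ) (hN : 1 ≤ N) (a z : Fin N → ℂ)
    (ha : ∀ j, a j ≠ 0) (hzinj : Function.Injective z)
    (hz : ∀ j, 0 < ‖z j‖ ∧ ‖z j‖ < 1)
    (f : ℕ → ℂ) (hf : ∀ k, f k = ∑ j, a j * z j ^ k)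
    (v : ℕ → ℂ) (hv : Memℓp v 2) :
    (∀ k : ℕ, ∑' r, f (k + r) * (starRingEnd ℂ) (v r) = 0) ↔
    ∀ j, ∑' k : ℕ, (starRingEnd ℂ) (v k) * z j ^ k = 0 := by
  -- boundedness of v
  obtain ⟨C, hC⟩ := (hv.of_exponent_ge (le_top : (2:ENNReal) ≤ ⊤)).bddAbove
  have hCb : ∀ r : ℕ, ‖v r‖ ≤ C := fun r => hC ⟨r, rfl⟩
  -- summability of each term
  have hsum : ∀ j : Fin N, Summable (fun r : ℕ => (starRingEnd ℂ) (v r) * z j ^ r) := by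
    intro j
    have hg : Summable (fun r : ℕ => C * ‖z j‖ ^ r) :=
      (summable_geometric_of_lt_one (norm_nonneg _) (hz j).2).mul_left C
    refine Summable.of_norm_bounded hg fun r => ?_
    rw [norm_mul, norm_pow, RCLike.norm_conj]
    exact mul_le_mul_of_nonneg_right (hCb r) (by positivity)
  set S : Fin N → ℂ := fun j => ∑' k : ℕ, (starRingEnd ℂ) (v k) * z j ^ k with hS
  -- key identity
  have key : ∀ k : ℕ, ∑' r, f (k + r) * (starRingEnd ℂ) (v r)
      = ∑ j, a j * z j ^ k * S j := by
    intro k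
    have h1 : ∀ r : ℕ, f (k + r) * (starRingEnd ℂ) (v r)
        = ∑ j, a j * z j ^ k * ((starRingEnd ℂ) (v r) * z j ^ r) := by
      intro r
      rw [hf, Finset.sum_mul]
      refine Finset.sum_congr rfl fun j _ => ?_
      rw [pow_add]; ring
    calc ∑' r, f (k + r) * (starRingEnd ℂ) (v r)
        = ∑' r, ∑ j, a j * z j ^ k * ((starRingEnd ℂ) (v r) * z j ^ r) := by
          exact tsum_congr h1
      _ = ∑ j, ∑' r, a j * z j ^ k * ((starRingEnd ℂ) (v r) * z j ^ r) :=
          Summable.tsum_finsetSum (fun j _ => (hsum j).mul_left _)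
      _ = ∑ j, a j * z j ^ k * S j := by
          exact Finset.sum_congr rfl fun j _ => (hsum j).tsum_mul_left _
  constructor
  · intro h j
    have h2 : ∀ k : ℕ, ∑ i, a i * S i * z i ^ k = 0 := by
      intro k
      have := (key k).symm.trans (h k)
      rw [← this]
      exact Finset.sum_congr rfl fun i _ => by ring
    have h3 : (fun i => a i * S i) = 0 :=
      Matrix.eq_zero_of_forall_pow_sum_mul_pow_eq_zero hzinj
        (fun i : Fin N => h2 (i : ℕ))
    have := congrFun h3 j
    simp only [Pi.zero_apply, mul_eq_zero] at this
    exact this.resolve_left (ha j)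
  · intro h k
    rw [key k]
    simp only [hS] at h ⊢
    refine Finset.sum_eq_zero fun j _ => ?_
    rw [h j, mul_zero]
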